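/- Let β > 1. Then for every irrational x ∈ [0,1) and every n ≥ 1, log q_{k_n(x)+3}(x) − (log β/2)·n ≥ −(log 6)/2. -/

import Mathlib

open MeasureTheory Filter Set

/-- The β-transformation `T_β x = βx - ⌊βx⌋` on `[0,1)`. -/
noncomputable def betaT (β : ℝ) (x : ℝ) : ℝ := β * x - ⌊β * x⌋

/-- The `i`-th digit (for `i ≥ 1`) of the β-expansion of `x`. -/
noncomputable def betaEps (β : ℝ) (i : ℕ) (x : ℝ) : ℤ := ⌊β * (betaT β)^[i - 1] x⌋

/-- The cylinder of order `n` of the β-expansion containing `x`. -/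
def betaCyl (β : ℝ) (n : ℕ) (x : ℝ) : Set ℝ :=
  {y ∈ Set.Ico (0:ℝ) 1 | ∀ i, 1 ≤ i → i ≤ n → betaEps β i y = betaEps β i x}

/-- The Gauss map, with `T 0 = 0`. -/
noncomputable def gaussMap (x : ℝ) : ℝ := if x = 0 then 0 else 1 / x - ⌊1 / x⌋

/-- The `i`-th partial quotient (for `i ≥ 1`) of the continued fraction expansion of `x`. -/
noncomputable def cfA (i : ℕ) (x : ℝ) : ℤ := ⌊1 / (gaussMap^[i - 1] x)⌋

/-- The cylinder of order `m` of the continued fraction expansion containing `x`. -/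
def cfCyl (m : ℕ) (x : ℝ) : Set ℝ :=
  {y ∈ Set.Ico (0:ℝ) 1 | ∀ i, 1 ≤ i → i ≤ m → cfA i y = cfA i x}

/-- `k_n(x)`: the exact number of partial quotients of the continued fraction of `x`
determined by the first `n` β-expansion digits of `x`. -/
noncomputable def kCF (β : ℝ) (n : ℕ) (x : ℝ) : ℕ :=
  sSup {m | betaCyl β n x ⊆ cfCyl m x}

/-- Denominators `q_n(x)` of the continued fraction convergents of `x`
(`q_0 = 1`, `q_1 = a_1`, `q_n = a_n q_{n-1} + q_{n-2}`). -/
noncomputable def cfQ (x : ℝ) : ℕ → ℤ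
  | 0 => 1
  | 1 => cfA 1 x
  | (n + 2) => cfA (n + 2) x * cfQ x (n + 1) + cfQ x n

/-- Numerators `p_n(x)` of the continued fraction convergents of `x`
(`p_0 = 0`, `p_1 = 1`, `p_n = a_n p_{n-1} + p_{n-2}`). -/
noncomputable def cfP (x : ℝ) : ℕ → ℤ
  | 0 => 0
  | 1 => 1
  | (n + 2) => cfA (n + 2) x * cfP x (n + 1) + cfP x n

/-- `l_n(x)`: the length of the longest string of zeros just after the `n`-th digit
of the β-expansion of `x`. -/
noncomputable def lZero (β : ℝ) (n : ℕ) (x : ℝ) : ℕ :=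
  sSup {k | ∀ j, 1 ≤ j → j ≤ k → betaEps β (n + j) x = 0}
namespace CFAux

open Set

lemma gauss_mem {z : ℝ} (hz : z ∈ Set.Ioo (0:ℝ) 1) (hirr : Irrational z) :
    gaussMap z ∈ Set.Ioo (0:ℝ) 1 ∧ Irrational (gaussMap z) := by
  have hz0 : z ≠ 0 := ne_of_gt hz.1
  have h1 : Irrational (1/z) := by
    rw [one_div]; exact hirr.inv
  have h2 : Irrational (1/z - ⌊1/z⌋) := h1.sub_intCast _
  have hg : gaussMap z = Int.fract (1/z) := by
    rw [gaussMap, if_neg hz0, Int.fract]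
  constructor
  · rw [hg]
    refine ⟨lt_of_le_of_ne (Int.fract_nonneg _) ?_, Int.fract_lt_one _⟩
    intro h
    have : Irrational (Int.fract (1/z)) := by rwa [Int.fract]
    exact this.ne_zero h.symm
  · rwa [hg, Int.fract]

lemma iter_gauss_mem {z : ℝ} (hz : z ∈ Set.Ioo (0:ℝ) 1) (hirr : Irrational z) (i : ℕ) :
    gaussMap^[i] z ∈ Set.Ioo (0:ℝ) 1 ∧ Irrational (gaussMap^[i] z) := by
  induction i with
  | zero => exact ⟨hz, hirr⟩
  | succ i ih =>
    rw [Function.iterate_succ_apply']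
    exact gauss_mem ih.1 ih.2

lemma cfA_one_le {z : ℝ} (hz : z ∈ Set.Ioo (0:ℝ) 1) (hirr : Irrational z) (i : ℕ) :
    1 ≤ cfA i z := by
  rw [cfA]
  obtain ⟨⟨h0, h1⟩, -⟩ := iter_gauss_mem hz hirr (i-1)
  rw [Int.le_floor]
  push_cast
  exact (le_div_iff₀ h0).mpr (by simpa using h1.le)

lemma cfA_shift (z : ℝ) {i : ℕ} (hi : 1 ≤ i) :
    cfA (i+1) z = cfA i (gaussMap z) := by
  obtain ⟨j, rfl⟩ := Nat.exists_eq_add_of_le hi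
  rw [cfA, cfA]
  congr 2
  simp [Nat.add_sub_cancel_left, Nat.add_comm 1 j, Function.iterate_succ_apply]

end CFAux
namespace CFAux

open Set

section Continuants

variable {z : ℝ} (ha : ∀ i, 1 ≤ i → 1 ≤ cfA i z)

include ha

lemma cfQ_one_le : ∀ m, 1 ≤ cfQ z m := by
  intro m
  induction m using Nat.twoStepInduction with
  | zero => simp [cfQ]
  | one => simpa [cfQ] using ha 1 le_rfl
  | more m ih1 ih2 =>
    rw [cfQ]
    have h1 : 1 ≤ cfA (m+2) z := ha _ (by omega)
    nlinarith

lemma cfP_nonneg : ∀ m, 0 ≤ cfP z m := by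
  intro m
  induction m using Nat.twoStepInduction with
  | zero => simp [cfP]
  | one => simp [cfP]
  | more m ih1 ih2 =>
    rw [cfP]
    have h1 : 1 ≤ cfA (m+2) z := ha _ (by omega)
    nlinarith

lemma cfP_one_le : ∀ m, 1 ≤ cfP z (m+1) := by
  intro m
  induction m using Nat.twoStepInduction with
  | zero => simp [cfP]
  | one =>
    show 1 ≤ cfA 2 z * cfP z 1 + cfP z 0
    have h1 : 1 ≤ cfA 2 z := ha _ (by omega)
    simp [cfP]; omega
  | more m ih1 ih2 =>
    show 1 ≤ cfA (m+3) z * cfP z (m+2) + cfP z (m+1)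
    have h1 : 1 ≤ cfA (m+3) z := ha _ (by omega)
    nlinarith

lemma cfP_le_cfQ : ∀ m, cfP z m ≤ cfQ z m := by
  intro m
  induction m using Nat.twoStepInduction with
  | zero => simp [cfP, cfQ]
  | one => simpa [cfP, cfQ] using ha 1 le_rfl
  | more m ih1 ih2 =>
    rw [cfP, cfQ]
    have h1 : 1 ≤ cfA (m+2) z := ha _ (by omega)
    nlinarith [cfP_nonneg ha (m+1), cfQ_one_le ha (m+1)]

lemma cfQ_mono_succ : ∀ m, cfQ z m ≤ cfQ z (m+1) := by
  intro m
  match m with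
  | 0 => simpa [cfQ] using ha 1 le_rfl
  | (m+1) =>
    show cfQ z (m+1) ≤ cfA (m+2) z * cfQ z (m+1) + cfQ z m
    have h1 : 1 ≤ cfA (m+2) z := ha _ (by omega)
    nlinarith [cfQ_one_le ha (m+1), cfQ_one_le ha m]

lemma cfQ_mono : ∀ {m m'}, m ≤ m' → cfQ z m ≤ cfQ z m' := by
  intro m m' h
  induction m' with
  | zero => simp_all
  | succ m' ih =>
    rcases Nat.lt_or_ge m (m'+1) with h'|h'
    · exact le_trans (ih (by omega)) (cfQ_mono_succ ha m')
    · have : m = m' + 1 := by omega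
      simp [this]

lemma le_cfQ : ∀ m : ℕ, (m : ℤ) ≤ cfQ z m := by
  intro m
  induction m using Nat.twoStepInduction with
  | zero => simp [cfQ]
  | one => simpa [cfQ] using ha 1 le_rfl
  | more m ih1 ih2 =>
    rw [cfQ]
    have h1 : 1 ≤ cfA (m+2) z := ha _ (by omega)
    have h2 := cfQ_one_le ha (m+1)
    have h3 := cfQ_one_le ha m
    have h4 : cfQ z (m+1) ≤ cfA (m+2) z * cfQ z (m+1) :=
      le_mul_of_one_le_left (by linarith) h1
    push_cast at ih1 ih2 ⊢
    linarith

end Continuants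

end CFAux
namespace CFAux

lemma shiftPQ (z : ℝ) : ∀ m : ℕ,
    cfP z (m+1) = cfQ (gaussMap z) m ∧
    cfQ z (m+1) = cfA 1 z * cfQ (gaussMap z) m + cfP (gaussMap z) m := by
  intro m
  induction m using Nat.twoStepInduction with
  | zero => simp [cfP, cfQ]
  | one =>
    have h := cfA_shift z (i := 1) le_rfl
    constructor
    · show cfA 2 z * cfP z 1 + cfP z 0 = cfA 1 (gaussMap z)
      simp [cfP, h]
    · show cfA 2 z * cfQ z 1 + cfQ z 0 = cfA 1 z * cfA 1 (gaussMap z) + cfP (gaussMap z) 1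
      simp [cfP, cfQ, h]; ring
  | more m ih1 ih2 =>
    have h : cfA (m+3) z = cfA (m+2) (gaussMap z) := cfA_shift z (by omega)
    constructor
    · show cfA (m+3) z * cfP z (m+2) + cfP z (m+1)
        = cfA (m+2) (gaussMap z) * cfQ (gaussMap z) (m+1) + cfQ (gaussMap z) m
      rw [h, ih1.1, ih2.1]
    · show cfA (m+3) z * cfQ z (m+2) + cfQ z (m+1)
        = cfA 1 z * (cfA (m+2) (gaussMap z) * cfQ (gaussMap z) (m+1) + cfQ (gaussMap z) m)
          + (cfA (m+2) (gaussMap z) * cfP (gaussMap z) (m+1) + cfP (gaussMap z) m)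
      rw [h, ih1.2, ih2.2]; ring

end CFAux
namespace CFAux

open Set

noncomputable def cfE1 (z : ℝ) (m : ℕ) : ℝ := (cfP z m : ℝ) / (cfQ z m : ℝ)

noncomputable def cfE2 (z : ℝ) (m : ℕ) : ℝ :=
  ((cfP z (m+1) : ℝ) + (cfP z m : ℝ)) / ((cfQ z (m+1) : ℝ) + (cfQ z m : ℝ))

lemma aux_div {a S T : ℝ} (ha1 : 1 ≤ a) (hS : 0 < S) (hT : 0 ≤ T) :
    S / (a*S + T) = 1 / (a + T/S) := by
  have hd : 0 < a*S + T := by nlinarith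
  have hd2 : 0 < a + T/S := by positivity
  rw [div_eq_div_iff hd.ne' hd2.ne']
  field_simp

section Ebounds

variable {z : ℝ} (ha : ∀ i, 1 ≤ i → 1 ≤ cfA i z)
include ha

lemma cfQr_pos (m : ℕ) : (0:ℝ) < (cfQ z m : ℝ) := by
  exact_mod_cast lt_of_lt_of_le zero_lt_one (cfQ_one_le ha m)

lemma cfE1_nonneg (m : ℕ) : 0 ≤ cfE1 z m :=
  div_nonneg (by exact_mod_cast cfP_nonneg ha m) (le_of_lt (cfQr_pos ha m))

lemma cfE1_le_one (m : ℕ) : cfE1 z m ≤ 1 := by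
  rw [cfE1, div_le_one (cfQr_pos ha m)]
  exact_mod_cast cfP_le_cfQ ha m

lemma cfE2_denom_pos (m : ℕ) : (0:ℝ) < (cfQ z (m+1) : ℝ) + (cfQ z m : ℝ) := by
  have := cfQr_pos ha m; have := cfQr_pos ha (m+1); linarith

lemma cfE2_nonneg (m : ℕ) : 0 ≤ cfE2 z m := by
  apply div_nonneg _ (le_of_lt (cfE2_denom_pos ha m))
  have h1 : (0:ℝ) ≤ (cfP z (m+1) : ℝ) := by exact_mod_cast cfP_nonneg ha (m+1)
  have h2 : (0:ℝ) ≤ (cfP z m : ℝ) := by exact_mod_cast cfP_nonneg ha m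
  linarith

lemma cfE2_le_one (m : ℕ) : cfE2 z m ≤ 1 := by
  rw [cfE2, div_le_one (cfE2_denom_pos ha m)]
  have h1 : (cfP z (m+1) : ℝ) ≤ (cfQ z (m+1) : ℝ) := by exact_mod_cast cfP_le_cfQ ha (m+1)
  have h2 : (cfP z m : ℝ) ≤ (cfQ z m : ℝ) := by exact_mod_cast cfP_le_cfQ ha m
  linarith

lemma ha_shift : ∀ i, 1 ≤ i → 1 ≤ cfA i (gaussMap z) := by
  intro i hi
  rw [← cfA_shift z hi]
  exact ha (i+1) (by omega)

lemma cfE1_shift (t : ℕ) :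
    cfE1 z (t+2) = 1 / ((cfA 1 z : ℝ) + cfE1 (gaussMap z) (t+1)) := by
  have h1 := (shiftPQ z (t+1)).1
  have h2 := (shiftPQ z (t+1)).2
  have hq := cfQr_pos (ha_shift ha) (t+1)
  have hp : (0:ℝ) ≤ (cfP (gaussMap z) (t+1) : ℝ) := by
    exact_mod_cast cfP_nonneg (ha_shift ha) (t+1)
  have ha1 : (1:ℝ) ≤ (cfA 1 z : ℝ) := by exact_mod_cast ha 1 le_rfl
  rw [cfE1, cfE1, h1, h2]
  push_cast
  exact aux_div ha1 hq hp

lemma cfE2_shift (t : ℕ) :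
    cfE2 z (t+1) = 1 / ((cfA 1 z : ℝ) + cfE2 (gaussMap z) t) := by
  have h1 := (shiftPQ z (t+1)).1
  have h2 := (shiftPQ z (t+1)).2
  have h1' := (shiftPQ z t).1
  have h2' := (shiftPQ z t).2
  have hq := cfE2_denom_pos (ha_shift ha) t
  have hp1 : (0:ℝ) ≤ (cfP (gaussMap z) (t+1) : ℝ) := by
    exact_mod_cast cfP_nonneg (ha_shift ha) (t+1)
  have hp0 : (0:ℝ) ≤ (cfP (gaussMap z) t : ℝ) := by
    exact_mod_cast cfP_nonneg (ha_shift ha) t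
  have ha1 : (1:ℝ) ≤ (cfA 1 z : ℝ) := by exact_mod_cast ha 1 le_rfl
  rw [cfE2, cfE2, h1, h2, h1', h2']
  push_cast
  have key := aux_div (a := (cfA 1 z : ℝ))
    (S := (cfQ (gaussMap z) (t+1) : ℝ) + (cfQ (gaussMap z) t : ℝ))
    (T := (cfP (gaussMap z) (t+1) : ℝ) + (cfP (gaussMap z) t : ℝ))
    ha1 hq (by linarith)
  rw [← key]
  congr 1
  ring

end Ebounds

end CFAux
namespace CFAux

open Set

lemma floor_inv_eq {a : ℤ} (ha1 : 1 ≤ a) {w : ℝ} (h1 : 1/((a:ℝ)+1) < w) (h2 : w < 1/(a:ℝ)) :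
    ⌊1/w⌋ = a ∧ 0 < w := by
  have ha0 : (0:ℝ) < (a:ℝ) := by exact_mod_cast ha1
  have hw0 : 0 < w := lt_trans (by positivity) h1
  have hlt : (a:ℝ) < 1/w := by
    rw [lt_div_iff₀ hw0]
    have := (lt_div_iff₀ ha0).mp h2
    linarith
  have hgt : 1/w < (a:ℝ)+1 := by
    rw [div_lt_iff₀ hw0]
    have := (div_lt_iff₀ (by positivity : (0:ℝ) < (a:ℝ)+1)).mp h1
    linarith
  refine ⟨?_, hw0⟩
  rw [Int.floor_eq_iff]
  constructor
  · exact le_of_lt hlt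
  · push_cast; exact hgt

lemma backward : ∀ (t : ℕ) (z : ℝ), z ∈ Set.Ioo (0:ℝ) 1 → Irrational z → ∀ w : ℝ,
    min (cfE1 z (t+1)) (cfE2 z t) < w → w < max (cfE1 z (t+1)) (cfE2 z t) →
    ∀ i, 1 ≤ i → i ≤ t+1 → cfA i w = cfA i z := by
  intro t
  induction t with
  | zero =>
    intro z hz hirr w hw1 hw2 i hi1 hi2
    have hi : i = 1 := by omega
    subst hi
    have ha1 : (1:ℤ) ≤ cfA 1 z := cfA_one_le hz hirr 1
    have ha1r : (1:ℝ) ≤ (cfA 1 z : ℝ) := by exact_mod_cast ha1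
    have e1 : cfE1 z 1 = 1/((cfA 1 z : ℝ)) := by
      rw [cfE1]; norm_num [cfP, cfQ]
    have e2 : cfE2 z 0 = 1/((cfA 1 z : ℝ)+1) := by
      rw [cfE2]; norm_num [cfP, cfQ]
    have hord : 1/((cfA 1 z : ℝ)+1) ≤ 1/(cfA 1 z : ℝ) :=
      one_div_le_one_div_of_le (by linarith) (by linarith)
    rw [e1, e2, min_eq_right hord] at hw1
    rw [e1, e2, max_eq_left hord] at hw2
    obtain ⟨hfl, -⟩ := floor_inv_eq ha1 hw1 hw2
    simpa [cfA] using hfl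
  | succ t ih =>
    intro z hz hirr w hw1 hw2
    have haz : ∀ i, 1 ≤ i → 1 ≤ cfA i z := fun i _ => cfA_one_le hz hirr i
    obtain ⟨hz', hirr'⟩ := gauss_mem hz hirr
    have haz' : ∀ i, 1 ≤ i → 1 ≤ cfA i (gaussMap z) :=
      fun i _ => cfA_one_le hz' hirr' i
    set a : ℝ := (cfA 1 z : ℝ) with hadef
    have ha1r : 1 ≤ a := by rw [hadef]; exact_mod_cast haz 1 le_rfl
    set u1 := cfE1 (gaussMap z) (t+1) with hu1def
    set u2 := cfE2 (gaussMap z) t with hu2def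
    have hu1 : 0 ≤ u1 := cfE1_nonneg haz' (t+1)
    have hu1' : u1 ≤ 1 := cfE1_le_one haz' (t+1)
    have hu2 : 0 ≤ u2 := cfE2_nonneg haz' t
    have hu2' : u2 ≤ 1 := cfE2_le_one haz' t
    have he1 : cfE1 z (t+1+1) = 1/(a+u1) := cfE1_shift haz t
    have he2 : cfE2 z (t+1) = 1/(a+u2) := cfE2_shift haz t
    rw [he1, he2] at hw1 hw2
    have hp1 : (0:ℝ) < a + u1 := by linarith
    have hp2 : (0:ℝ) < a + u2 := by linarith
    have hwlo : 1/(a+1) < w := by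
      refine lt_of_le_of_lt (le_min ?_ ?_) hw1 <;>
        exact one_div_le_one_div_of_le (by linarith) (by linarith)
    have hwhi : w < 1/a := by
      refine lt_of_lt_of_le hw2 (max_le ?_ ?_) <;>
        exact one_div_le_one_div_of_le (by linarith) (by linarith)
    obtain ⟨hfl, hw0⟩ := floor_inv_eq (haz 1 le_rfl) hwlo hwhi
    have hcf1 : cfA 1 w = cfA 1 z := by simpa [cfA] using hfl
    have hgw : gaussMap w = 1/w - a := by rw [gaussMap, if_neg hw0.ne', hfl]
    have key1 : min u1 u2 < gaussMap w := by
      rw [hgw]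
      rcases le_total u1 u2 with h|h
      · have hle : 1/(a+u2) ≤ 1/(a+u1) :=
          one_div_le_one_div_of_le hp1 (by linarith)
        have hw' : w < 1/(a+u1) := lt_of_lt_of_le hw2 (max_le le_rfl hle)
        have := (lt_div_iff₀ hp1).mp hw'
        rw [min_eq_left h]
        have h2 : a + u1 < 1/w := by rw [lt_div_iff₀ hw0]; linarith
        linarith
      · have hle : 1/(a+u1) ≤ 1/(a+u2) :=
          one_div_le_one_div_of_le hp2 (by linarith)
        have hw' : w < 1/(a+u2) := lt_of_lt_of_le hw2 (max_le hle le_rfl)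
        have := (lt_div_iff₀ hp2).mp hw'
        rw [min_eq_right h]
        have h2 : a + u2 < 1/w := by rw [lt_div_iff₀ hw0]; linarith
        linarith
    have key2 : gaussMap w < max u1 u2 := by
      rw [hgw]
      rcases le_total u1 u2 with h|h
      · have hle : 1/(a+u2) ≤ 1/(a+u1) :=
          one_div_le_one_div_of_le hp1 (by linarith)
        have hw' : 1/(a+u2) < w := by rwa [min_eq_right hle] at hw1
        have := (div_lt_iff₀ hp2).mp hw'
        rw [max_eq_right h]
        have h2 : 1/w < a + u2 := by rw [div_lt_iff₀ hw0]; linarith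
        linarith
      · have hle : 1/(a+u1) ≤ 1/(a+u2) :=
          one_div_le_one_div_of_le hp2 (by linarith)
        have hw' : 1/(a+u1) < w := by rwa [min_eq_left hle] at hw1
        have := (div_lt_iff₀ hp1).mp hw'
        rw [max_eq_left h]
        have h2 : 1/w < a + u1 := by rw [div_lt_iff₀ hw0]; linarith
        linarith
    have hdig := ih (gaussMap z) hz' hirr' (gaussMap w) key1 key2
    intro i hi1 hi2
    rcases Nat.eq_or_lt_of_le hi1 with h|h
    · rw [← h]; exact hcf1
    · obtain ⟨j, rfl⟩ : ∃ j, i = j+1 := ⟨i-1, by omega⟩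
      have hj1 : 1 ≤ j := by omega
      rw [cfA_shift w hj1, cfA_shift z hj1]
      exact hdig j hj1 (by omega)

end CFAux
namespace CFAux

open Set

lemma forward : ∀ (t : ℕ) (z : ℝ), (∀ i, 1 ≤ i → 1 ≤ cfA i z) → ∀ w : ℝ, 0 ≤ w → w < 1 →
    (∀ i, 1 ≤ i → i ≤ t+1 → cfA i w = cfA i z) →
    min (cfE1 z (t+1)) (cfE2 z t) ≤ w ∧ w ≤ max (cfE1 z (t+1)) (cfE2 z t) := by
  have basic : ∀ (z : ℝ), (∀ i, 1 ≤ i → 1 ≤ cfA i z) → ∀ w : ℝ, 0 ≤ w →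
      cfA 1 w = cfA 1 z → 0 < w ∧ ⌊1/w⌋ = cfA 1 z ∧
        1/((cfA 1 z : ℝ)+1) < w ∧ w ≤ 1/(cfA 1 z : ℝ) := by
    intro z haz w hw0 h1
    have ha1 : (1:ℤ) ≤ cfA 1 z := haz 1 le_rfl
    have hfl : ⌊1/w⌋ = cfA 1 z := by
      rw [← h1]; simp [cfA]
    have hwne : w ≠ 0 := by
      intro h; rw [h] at hfl; simp at hfl; omega
    have hw0' : 0 < w := lt_of_le_of_ne hw0 (Ne.symm hwne)
    have ha1r : (1:ℝ) ≤ (cfA 1 z : ℝ) := by exact_mod_cast ha1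
    have hle : (cfA 1 z : ℝ) ≤ 1/w := by rw [← hfl]; exact Int.floor_le _
    have hlt : 1/w < (cfA 1 z : ℝ) + 1 := by
      rw [← hfl]; push_cast; exact Int.lt_floor_add_one _
    refine ⟨hw0', hfl, ?_, ?_⟩
    · rw [div_lt_iff₀ (by linarith)]
      have := (div_lt_iff₀ hw0').mp hlt
      linarith
    · rw [le_div_iff₀ (by linarith)]
      have := (le_div_iff₀ hw0').mp hle
      linarith
  intro t
  induction t with
  | zero =>
    intro z haz w hw0 hw1 hd
    obtain ⟨hw0', hfl, hlo, hhi⟩ := basic z haz w hw0 (hd 1 le_rfl le_rfl)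
    have ha1r : (1:ℝ) ≤ (cfA 1 z : ℝ) := by exact_mod_cast haz 1 le_rfl
    have e1 : cfE1 z 1 = 1/((cfA 1 z : ℝ)) := by
      rw [cfE1]; norm_num [cfP, cfQ]
    have e2 : cfE2 z 0 = 1/((cfA 1 z : ℝ)+1) := by
      rw [cfE2]; norm_num [cfP, cfQ]
    have hord : 1/((cfA 1 z : ℝ)+1) ≤ 1/(cfA 1 z : ℝ) :=
      one_div_le_one_div_of_le (by linarith) (by linarith)
    rw [e1, e2, min_eq_right hord, max_eq_left hord]
    exact ⟨le_of_lt hlo, hhi⟩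
  | succ t ih =>
    intro z haz w hw0 hw1 hd
    have haz' : ∀ i, 1 ≤ i → 1 ≤ cfA i (gaussMap z) := ha_shift haz
    obtain ⟨hw0', hfl, hlo, hhi⟩ := basic z haz w hw0 (hd 1 le_rfl (by omega))
    set a : ℝ := (cfA 1 z : ℝ) with hadef
    have ha1r : 1 ≤ a := by rw [hadef]; exact_mod_cast haz 1 le_rfl
    have hgw : gaussMap w = 1/w - a := by rw [gaussMap, if_neg hw0'.ne', hfl]
    have hw'0 : 0 ≤ gaussMap w := by
      rw [hgw, hadef, ← hfl]; rw [sub_nonneg]; exact Int.floor_le _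
    have hw'1 : gaussMap w < 1 := by
      rw [hgw, hadef, ← hfl, sub_lt_iff_lt_add]
      have := Int.lt_floor_add_one (1/w)
      push_cast; push_cast at this; linarith
    have hd' : ∀ i, 1 ≤ i → i ≤ t+1 → cfA i (gaussMap w) = cfA i (gaussMap z) := by
      intro i hi1 hi2
      rw [← cfA_shift w hi1, ← cfA_shift z hi1]
      exact hd (i+1) (by omega) (by omega)
    obtain ⟨hk1, hk2⟩ := ih (gaussMap z) haz' (gaussMap w) hw'0 hw'1 hd'
    set u1 := cfE1 (gaussMap z) (t+1) with hu1def
    set u2 := cfE2 (gaussMap z) t with hu2def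
    have hu1 : 0 ≤ u1 := cfE1_nonneg haz' (t+1)
    have hu2 : 0 ≤ u2 := cfE2_nonneg haz' t
    have he1 : cfE1 z (t+1+1) = 1/(a+u1) := cfE1_shift haz t
    have he2 : cfE2 z (t+1) = 1/(a+u2) := cfE2_shift haz t
    rw [he1, he2]
    have hp1 : (0:ℝ) < a + u1 := by linarith
    have hp2 : (0:ℝ) < a + u2 := by linarith
    have hweq : w = 1/(a + gaussMap w) := by
      rw [hgw]
      have : a + (1/w - a) = 1/w := by ring
      rw [this, one_div_one_div]
    rcases le_total u1 u2 with h|h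
    · have hle : 1/(a+u2) ≤ 1/(a+u1) := one_div_le_one_div_of_le hp1 (by linarith)
      have hm1 : min u1 u2 = u1 := min_eq_left h
      have hm2 : max u1 u2 = u2 := max_eq_right h
      rw [hm1] at hk1; rw [hm2] at hk2
      constructor
      · refine le_trans (min_le_right _ _) ?_
        rw [hweq]
        exact one_div_le_one_div_of_le (by linarith) (by linarith)
      · refine le_trans ?_ (le_max_left _ _)
        rw [hweq]
        exact one_div_le_one_div_of_le (by linarith [hw'0]) (by linarith)
    · have hle : 1/(a+u1) ≤ 1/(a+u2) := one_div_le_one_div_of_le hp2 (by linarith)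
      have hm1 : min u1 u2 = u2 := min_eq_right h
      have hm2 : max u1 u2 = u1 := max_eq_left h
      rw [hm1] at hk1; rw [hm2] at hk2
      constructor
      · refine le_trans (min_le_left _ _) ?_
        rw [hweq]
        exact one_div_le_one_div_of_le (by linarith) (by linarith)
      · refine le_trans ?_ (le_max_right _ _)
        rw [hweq]
        exact one_div_le_one_div_of_le (by linarith [hw'0]) (by linarith)

end CFAux
namespace CFAux

open Set

variable {z : ℝ}

lemma cfA_eq_floor (z : ℝ) (t : ℕ) : cfA (t+1) z = ⌊1/(gaussMap^[t] z)⌋ := by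
  simp [cfA]

lemma gauss_iter_succ (hz : z ∈ Set.Ioo (0:ℝ) 1) (hirr : Irrational z) (t : ℕ) :
    (gaussMap^[t] z) * ((cfA (t+1) z : ℝ) + gaussMap^[t+1] z) = 1 := by
  obtain ⟨hmem, hi⟩ := iter_gauss_mem hz hirr t
  have hne : gaussMap^[t] z ≠ 0 := ne_of_gt hmem.1
  rw [Function.iterate_succ_apply', gaussMap, if_neg hne, cfA_eq_floor]
  have h : ((⌊1/(gaussMap^[t] z)⌋ : ℝ) + (1/(gaussMap^[t] z) - ⌊1/(gaussMap^[t] z)⌋))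
      = 1/(gaussMap^[t] z) := by ring
  rw [h]
  field_simp

lemma conv_identity (hz : z ∈ Set.Ioo (0:ℝ) 1) (hirr : Irrational z) : ∀ t : ℕ,
    z * ((cfQ z (t+1) : ℝ) + (cfQ z t : ℝ) * gaussMap^[t+1] z)
      = (cfP z (t+1) : ℝ) + (cfP z t : ℝ) * gaussMap^[t+1] z := by
  intro t
  induction t with
  | zero =>
    have h := gauss_iter_succ hz hirr 0
    simp only [Function.iterate_zero_apply] at h
    simp only [cfQ, cfP]
    push_cast
    linear_combination h
  | succ t ih =>
    have h := gauss_iter_succ hz hirr (t+1)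
    have hq : cfQ z (t+2) = cfA (t+2) z * cfQ z (t+1) + cfQ z t := by rw [cfQ]
    have hp : cfP z (t+2) = cfA (t+2) z * cfP z (t+1) + cfP z t := by rw [cfP]
    rw [show t+1+1 = t+2 from rfl, hq, hp]
    push_cast
    linear_combination ((cfA (t+2) z : ℝ) + gaussMap^[t+2] z) * ih
      + ((cfP z t : ℝ) - z * (cfQ z t : ℝ)) * h

lemma conv_det (z : ℝ) : ∀ t : ℕ,
    cfP z (t+1) * cfQ z t - cfQ z (t+1) * cfP z t = (-1)^t := by
  intro t
  induction t with
  | zero => simp [cfP, cfQ]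
  | succ t ih =>
    have hq : cfQ z (t+2) = cfA (t+2) z * cfQ z (t+1) + cfQ z t := by rw [cfQ]
    have hp : cfP z (t+2) = cfA (t+2) z * cfP z (t+1) + cfP z t := by rw [cfP]
    rw [show t+1+1 = t+2 from rfl, hq, hp]
    linear_combination (-1 : ℤ) * ih


lemma bound1 {A2 Q0 Q1 Q3 S D : ℝ} (hA2 : 1 ≤ A2) (hQ0 : 1 ≤ Q0) (hQ01 : Q0 ≤ Q1)
    (hS0 : 0 < S) (hSlb : 1 < S*(A2+1)) (hD0 : 0 < D) (hDle : D ≤ Q1+Q0)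
    (h5 : (A2+1)*Q1 + Q0 ≤ Q3) :
    D*Q1 < S*(6*Q3^2) := by
  have hQ1 : (1:ℝ) ≤ Q1 := le_trans hQ0 hQ01
  have hX0 : (0:ℝ) ≤ (A2+1)*Q1 + Q0 := by nlinarith [mul_nonneg (show (0:ℝ) ≤ A2+1 by linarith) (show (0:ℝ) ≤ Q1 by linarith)]
  have hsq : ((A2+1)*Q1+Q0)^2 ≤ Q3^2 := by nlinarith
  have h6 : (A2+1)*(Q1*(Q1+Q0)) ≤ Q3^2 := by
    nlinarith [hsq, mul_nonneg (mul_nonneg (show (0:ℝ) ≤ A2+1 by linarith)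
      (show (0:ℝ) ≤ A2 by linarith)) (sq_nonneg Q1),
      mul_nonneg (mul_nonneg (show (0:ℝ) ≤ A2+1 by linarith)
      (show (0:ℝ) ≤ Q1 by linarith)) (show (0:ℝ) ≤ Q0 by linarith),
      sq_nonneg Q0]
  have hQQpos : (0:ℝ) < Q1*(Q1+Q0) := by nlinarith
  have h7 : D*Q1 ≤ Q1*(Q1+Q0) := by nlinarith
  have h8 := mul_lt_mul_of_pos_right hSlb hQQpos
  have h9 := mul_le_mul_of_nonneg_left h6 hS0.le
  nlinarith [mul_nonneg hS0.le (sq_nonneg Q3)]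

lemma bound2a {S S' A3 D Q0 Q1 Q2 Q3 : ℝ} (hS0 : 0 < S) (hS'0 : 0 < S') (hS'lt : S' < 1)
    (hS1 : S*(1+S') = 1) (hS'lb : 1 < S'*(A3+1)) (hA3 : 1 ≤ A3)
    (hQ2e : Q2 = Q1+Q0) (hQ0 : 1 ≤ Q0) (hQ01 : Q0 ≤ Q1)
    (hD0 : 0 < D) (hDle : D ≤ Q2) (hQ3A : A3*Q2 ≤ Q3) (hQ23 : Q2 ≤ Q3) :
    D*(Q1+Q0) < (1-S)*(6*Q3^2) := by
  rw [← hQ2e]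
  have hQ2pos : (0:ℝ) < Q2 := by rw [hQ2e]; linarith
  have hQ3pos : (0:ℝ) < Q3 := lt_of_lt_of_le hQ2pos hQ23
  have hSlt : S < 1 := by nlinarith [mul_pos hS0 hS'0]
  have h1 : (1-S)*(1+S') = S' := by linear_combination -hS1
  have h2 : S' < (1-S)*2 := by
    nlinarith [mul_pos (show (0:ℝ) < 1-S by linarith) (show (0:ℝ) < 1-S' by linarith)]
  have hkey : 1 < (1-S)*2*(A3+1) := by
    nlinarith [mul_lt_mul_of_pos_right h2 (show (0:ℝ) < A3+1 by linarith)]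
  have h3 : (A3+1)*Q2^2 ≤ 2*Q3^2 := by
    nlinarith [mul_le_mul hQ3A hQ23 hQ2pos.le hQ3pos.le, mul_self_le_mul_self hQ2pos.le hQ23]
  have h4 : D*Q2 ≤ Q2^2 := by nlinarith [mul_le_mul_of_nonneg_right hDle hQ2pos.le]
  have h5 : Q2^2 < (1-S)*2*(A3+1)*Q2^2 := by
    nlinarith [mul_lt_mul_of_pos_right hkey (show (0:ℝ) < Q2^2 by positivity)]
  have h6 : (1-S)*2*((A3+1)*Q2^2) ≤ (1-S)*2*(2*Q3^2) :=
    mul_le_mul_of_nonneg_left h3 (by nlinarith)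
  nlinarith [mul_nonneg (show (0:ℝ) ≤ 1-S by linarith) (sq_nonneg Q3)]

lemma bound2b {S D Q0 Q1 Q2 Q3 : ℝ} (hShalf : S < 1/2) (hS0 : 0 < S)
    (hQ0 : 1 ≤ Q0) (hQ01 : Q0 ≤ Q1)
    (hD0 : 0 < D) (hDle : D ≤ Q1+Q0) (hQ2ge : Q1+Q0 ≤ Q2) (hQ23 : Q2 ≤ Q3) :
    D*(Q1+Q0) < (1-S)*(6*Q3^2) := by
  have hQ3pos : (0:ℝ) < Q3 := by linarith
  have hQQ3 : Q1+Q0 ≤ Q3 := le_trans hQ2ge hQ23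
  have h4 : D*(Q1+Q0) ≤ Q3*Q3 :=
    mul_le_mul (le_trans hDle hQQ3) hQQ3 (by linarith) (by linarith)
  nlinarith [mul_pos hQ3pos hQ3pos,
    mul_lt_mul_of_pos_right (show (1:ℝ)/2 < 1-S by linarith)
      (show (0:ℝ) < 6*Q3^2 by positivity)]
lemma Slb {S S' A : ℝ} (hS0 : 0 < S) (hS'lt : S' < 1) (h : S*(A+S') = 1) :
    1 < S*(A+1) := by
  nlinarith [mul_pos hS0 (show (0:ℝ) < 1-S' by linarith)]

set_option maxHeartbeats 1000000 in
lemma endpoint_dist (hz : z ∈ Set.Ioo (0:ℝ) 1) (hirr : Irrational z) (t : ℕ) :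
    (z - cfE1 z (t+1)) * (z - cfE2 z t) < 0 ∧
    1/(6*((cfQ z (t+3) : ℝ))^2) < |z - cfE1 z (t+1)| ∧
    1/(6*((cfQ z (t+3) : ℝ))^2) < |z - cfE2 z t| := by
  have haz : ∀ i, 1 ≤ i → 1 ≤ cfA i z := fun i _ => cfA_one_le hz hirr i
  obtain ⟨hSm, -⟩ := iter_gauss_mem hz hirr (t+1)
  obtain ⟨hS'm, -⟩ := iter_gauss_mem hz hirr (t+2)
  obtain ⟨hS''m, -⟩ := iter_gauss_mem hz hirr (t+3)
  set S : ℝ := gaussMap^[t+1] z with hSdef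
  set S' : ℝ := gaussMap^[t+2] z with hS'def
  set S'' : ℝ := gaussMap^[t+3] z with hS''def
  set Q0 : ℝ := (cfQ z t : ℝ) with hQ0def
  set Q1 : ℝ := (cfQ z (t+1) : ℝ) with hQ1def
  set Q2 : ℝ := (cfQ z (t+2) : ℝ) with hQ2def
  set Q3 : ℝ := (cfQ z (t+3) : ℝ) with hQ3def
  set P0 : ℝ := (cfP z t : ℝ) with hP0def
  set P1 : ℝ := (cfP z (t+1) : ℝ) with hP1def
  set A2 : ℝ := (cfA (t+2) z : ℝ) with hA2def
  set A3 : ℝ := (cfA (t+3) z : ℝ) with hA3def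
  have hQ0 : 1 ≤ Q0 := by rw [hQ0def]; exact_mod_cast cfQ_one_le haz t
  have hQ1 : 1 ≤ Q1 := by rw [hQ1def]; exact_mod_cast cfQ_one_le haz (t+1)
  have hQ01 : Q0 ≤ Q1 := by rw [hQ0def, hQ1def]; exact_mod_cast cfQ_mono_succ haz t
  have hA2 : 1 ≤ A2 := by rw [hA2def]; exact_mod_cast haz (t+2) (by omega)
  have hA3 : 1 ≤ A3 := by rw [hA3def]; exact_mod_cast haz (t+3) (by omega)
  have hQ2 : Q2 = A2*Q1 + Q0 := by
    have h : cfQ z (t+2) = cfA (t+2) z * cfQ z (t+1) + cfQ z t := by rw [cfQ]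
    rw [hQ2def, hQ1def, hQ0def, hA2def, h]; push_cast; ring
  have hQ3 : Q3 = A3*Q2 + Q1 := by
    have h : cfQ z (t+3) = cfA (t+3) z * cfQ z (t+2) + cfQ z (t+1) := by rw [cfQ]
    rw [hQ3def, hQ2def, hQ1def, hA3def, h]; push_cast; ring
  have hP0 : 0 ≤ P0 := by rw [hP0def]; exact_mod_cast cfP_nonneg haz t
  have hP1 : 0 ≤ P1 := by rw [hP1def]; exact_mod_cast cfP_nonneg haz (t+1)
  have hid : z * (Q1 + Q0*S) = P1 + P0*S := conv_identity hz hirr t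
  have hdet : P1*Q0 - Q1*P0 = (-1:ℝ)^t := by
    rw [hP1def, hP0def, hQ1def, hQ0def]
    exact_mod_cast conv_det z t
  have hS1 : S * (A2 + S') = 1 := gauss_iter_succ hz hirr (t+1)
  have hS2 : S' * (A3 + S'') = 1 := gauss_iter_succ hz hirr (t+2)
  have hS0 : 0 < S := hSm.1
  have hSlt : S < 1 := hSm.2
  have hS'0 : 0 < S' := hS'm.1
  have hS'lt : S' < 1 := hS'm.2
  have hS''0 : 0 < S'' := hS''m.1
  have hS''lt : S'' < 1 := hS''m.2
  set D : ℝ := Q1 + Q0*S with hDdef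
  have hQ0S : 0 < Q0*S := mul_pos (by linarith) hS0
  have hD0 : 0 < D := by rw [hDdef]; linarith
  have hDle : D ≤ Q1 + Q0 := by
    rw [hDdef]
    have h := mul_le_mul_of_nonneg_left hSlt.le (show (0:ℝ) ≤ Q0 by linarith)
    rw [mul_one] at h
    linarith
  have hQ12 : Q1 ≤ Q2 := by
    rw [hQ2]
    have h := mul_le_mul_of_nonneg_right hA2 (show (0:ℝ) ≤ Q1 by linarith)
    rw [one_mul] at h
    linarith
  have hQ2pos : 0 < Q2 := by linarith
  have hQ23 : Q2 ≤ Q3 := by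
    rw [hQ3]
    have h := mul_le_mul_of_nonneg_right hA3 (show (0:ℝ) ≤ Q2 by linarith)
    rw [one_mul] at h
    linarith
  have hQ3pos : 0 < Q3 := by linarith
  have hSlb : 1 < S*(A2+1) := Slb hS0 hS'lt hS1
  have hS'lb : 1 < S'*(A3+1) := Slb hS'0 hS''lt hS2
  -- formulas for the differences
  have key1 : (z*Q1 - P1)*D = -((-1:ℝ)^t)*S := by
    linear_combination Q1*hid - S*hdet
  have key2 : (z*(Q1+Q0) - (P1+P0))*D = (-1:ℝ)^t*(1-S) := by
    linear_combination (Q1+Q0)*hid + (1-S)*hdet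
  have hQ1pos : (0:ℝ) < Q1 := by linarith
  have hQQpos : (0:ℝ) < Q1 + Q0 := by linarith
  have hd1 : z - cfE1 z (t+1) = -((-1:ℝ)^t)*S / (D*Q1) := by
    rw [cfE1, ← hP1def, ← hQ1def]
    have e1 : z - P1/Q1 = (z*Q1 - P1)/Q1 := by field_simp
    have e2 : z*Q1 - P1 = -((-1:ℝ)^t)*S/D := by
      rw [eq_div_iff hD0.ne']; exact key1
    rw [e1, e2, div_div]
  have hd2 : z - cfE2 z t = (-1:ℝ)^t*(1-S) / (D*(Q1+Q0)) := by
    rw [cfE2, ← hP1def, ← hP0def, ← hQ1def, ← hQ0def]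
    have e1 : z - (P1+P0)/(Q1+Q0) = (z*(Q1+Q0) - (P1+P0))/(Q1+Q0) := by field_simp
    have e2 : z*(Q1+Q0) - (P1+P0) = (-1:ℝ)^t*(1-S)/D := by
      rw [eq_div_iff hD0.ne']; exact key2
    rw [e1, e2, div_div]
  have ha1 : |z - cfE1 z (t+1)| = S/(D*Q1) := by
    rw [hd1, abs_div, abs_mul, abs_neg, abs_pow, abs_neg, abs_one, one_pow, one_mul,
      abs_of_pos hS0, abs_of_pos (by positivity : (0:ℝ) < D*Q1)]
  have ha2 : |z - cfE2 z t| = (1-S)/(D*(Q1+Q0)) := by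
    rw [hd2, abs_div, abs_mul, abs_pow, abs_neg, abs_one, one_pow, one_mul,
      abs_of_pos (by linarith : (0:ℝ) < 1-S),
      abs_of_pos (by positivity : (0:ℝ) < D*(Q1+Q0))]
  refine ⟨?_, ?_, ?_⟩
  · rw [hd1, hd2]
    rcases Nat.even_or_odd t with he|ho
    · rw [he.neg_one_pow]
      exact mul_neg_of_neg_of_pos
        (div_neg_of_neg_of_pos (by linarith) (by positivity))
        (div_pos (by linarith) (by positivity))
    · rw [ho.neg_one_pow]
      exact mul_neg_of_pos_of_neg
        (div_pos (by linarith) (by positivity))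
        (div_neg_of_neg_of_pos (by linarith) (by positivity))
  · rw [ha1, div_lt_div_iff₀ (by positivity) (by positivity), one_mul]
    have h5 : (A2+1)*Q1 + Q0 ≤ Q3 := by
      have hq2q3 : Q2 + Q1 ≤ Q3 := by
        rw [hQ3]
        have h := mul_le_mul_of_nonneg_right hA3 (show (0:ℝ) ≤ Q2 by linarith)
        rw [one_mul] at h
        linarith
      have h' : (A2+1)*Q1 + Q0 = Q2 + Q1 := by rw [hQ2]; ring
      linarith
    exact bound1 hA2 hQ0 hQ01 hS0 hSlb hD0 hDle h5
  · rw [ha2, div_lt_div_iff₀ (by positivity) (by positivity), one_mul]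
    rcases eq_or_lt_of_le (haz (t+2) (by omega)) with h|h
    · -- A2 = 1
      have hA2e : A2 = 1 := by rw [hA2def, ← h]; norm_num
      have hS1' : S*(1+S') = 1 := by rw [hA2e] at hS1; exact hS1
      have hQ2e : Q2 = Q1 + Q0 := by rw [hQ2, hA2e]; ring
      have hQ3A : A3*Q2 ≤ Q3 := by rw [hQ3]; linarith
      exact bound2a hS0 hS'0 hS'lt hS1' hS'lb hA3 hQ2e hQ0 hQ01 hD0
        (by rw [hQ2e]; exact hDle) hQ3A hQ23
    · -- A2 ≥ 2
      have hA2two : (2:ℝ) ≤ A2 := by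
        rw [hA2def]
        have : (2:ℤ) ≤ cfA (t+2) z := h
        exact_mod_cast this
      have hShalf : S < 1/2 := by
        have h1 := mul_le_mul_of_nonneg_left hA2two hS0.le
        linarith only [h1, hS1, mul_pos hS0 hS'0, hS0]
      have hQ2ge : Q1 + Q0 ≤ Q2 := by
        rw [hQ2]
        have h2 := mul_le_mul_of_nonneg_right hA2 (show (0:ℝ) ≤ Q1 by linarith)
        rw [one_mul] at h2
        linarith
      exact bound2b hShalf hS0 hQ0 hQ01 hD0 hDle hQ2ge hQ23


end CFAux
namespace CFAux

open Set

lemma iter_betaT_mem (β x : ℝ) (hx : x ∈ Set.Ico (0:ℝ) 1) (i : ℕ) :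
    (betaT β)^[i] x ∈ Set.Ico (0:ℝ) 1 := by
  induction i with
  | zero => exact hx
  | succ i ih =>
    rw [Function.iterate_succ_apply']
    constructor
    · have h := Int.fract_nonneg (β * (betaT β)^[i] x)
      rw [Int.fract] at h
      exact h
    · have h := Int.fract_lt_one (β * (betaT β)^[i] x)
      rw [Int.fract] at h
      exact h

lemma self_mem_betaCyl (β x : ℝ) (n : ℕ) (hx : x ∈ Set.Ico (0:ℝ) 1) :
    x ∈ betaCyl β n x := ⟨hx, fun _ _ _ => rfl⟩

lemma cyl_pow_diff {β x y : ℝ} {n : ℕ} (hy : y ∈ betaCyl β n x) :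
    ∀ i, i ≤ n → (betaT β)^[i] y - (betaT β)^[i] x = β^i * (y - x) := by
  intro i
  induction i with
  | zero => simp
  | succ i ih =>
    intro hin
    have hd := ih (by omega)
    have he : betaEps β (i+1) y = betaEps β (i+1) x := hy.2 (i+1) (by omega) hin
    have he' : ((⌊β * (betaT β)^[i] y⌋ : ℤ) : ℝ) = ((⌊β * (betaT β)^[i] x⌋ : ℤ) : ℝ) := by
      exact_mod_cast he
    rw [Function.iterate_succ_apply', Function.iterate_succ_apply', betaT, betaT]
    linear_combination β * hd - he'

lemma cyl_close {β x y : ℝ} {n : ℕ} (hβ : 1 < β) (hx : x ∈ Set.Ico (0:ℝ) 1)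
    (hy : y ∈ betaCyl β n x) : |y - x| * β^n < 1 := by
  have h := cyl_pow_diff hy n le_rfl
  have hyI := iter_betaT_mem β y hy.1 n
  have hxI := iter_betaT_mem β x hx n
  have habs : |(betaT β)^[n] y - (betaT β)^[n] x| < 1 := by
    rw [abs_sub_lt_iff]
    constructor <;> [linarith [hyI.2, hxI.1]; linarith [hxI.2, hyI.1]]
  rw [h, abs_mul, abs_of_pos (by positivity : (0:ℝ) < β^n)] at habs
  linarith [habs]

lemma approx_right (β : ℝ) (hβ : 1 < β) (x : ℝ) (hx : x ∈ Set.Ico (0:ℝ) 1) :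
    ∀ n : ℕ, ∃ δ : ℝ, 0 < δ ∧ ∀ d : ℝ, 0 ≤ d → d < δ →
      ((x + d) ∈ betaCyl β n x ∧ (betaT β)^[n] (x+d) = (betaT β)^[n] x + β^n * d) := by
  intro n
  induction n with
  | zero =>
    refine ⟨1 - x, by linarith [hx.2], ?_⟩
    intro d hd0 hd1
    refine ⟨⟨⟨by linarith [hx.1], by linarith⟩, ?_⟩, by simp⟩
    intro i hi1 hi0
    omega
  | succ n ih =>
    obtain ⟨δ, hδ0, hδ⟩ := ih
    have hTx := iter_betaT_mem β x hx (n+1)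
    set δ' := min δ ((1 - (betaT β)^[n+1] x)/β^(n+1)) with hδ'def
    have hδ'0 : 0 < δ' := by
      apply lt_min hδ0
      have h1 : 0 < 1 - (betaT β)^[n+1] x := by linarith [hTx.2]
      positivity
    refine ⟨δ', hδ'0, ?_⟩
    intro d hd0 hdδ
    obtain ⟨hmem, hiter⟩ := hδ d hd0 (lt_of_lt_of_le hdδ (min_le_left _ _))
    have hd2 : d < (1 - (betaT β)^[n+1] x)/β^(n+1) :=
      lt_of_lt_of_le hdδ (min_le_right _ _)
    have hβn : (0:ℝ) < β^(n+1) := by positivity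
    have hdb : β^(n+1) * d < 1 - (betaT β)^[n+1] x := by
      rw [lt_div_iff₀ hβn] at hd2
      linarith [hd2]
    -- floor equality at step n+1
    have hTn1 : (betaT β)^[n+1] x = β * (betaT β)^[n] x - ⌊β * (betaT β)^[n] x⌋ := by
      rw [Function.iterate_succ_apply', betaT]
    have hfloor : ⌊β * (betaT β)^[n] (x+d)⌋ = ⌊β * (betaT β)^[n] x⌋ := by
      rw [hiter]
      have hexp : β * ((betaT β)^[n] x + β^n * d) = β * (betaT β)^[n] x + β^(n+1) * d := by
        ring
      rw [hexp]
      rw [Int.floor_eq_iff]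
      constructor
      · have := Int.floor_le (β * (betaT β)^[n] x)
        nlinarith [mul_nonneg (le_of_lt hβn) hd0]
      · push_cast
        have := Int.lt_floor_add_one (β * (betaT β)^[n] x)
        have h3 : β^(n+1)*d < 1 - (β * (betaT β)^[n] x - ⌊β * (betaT β)^[n] x⌋) := by
          rw [← hTn1]; exact hdb
        linarith
    constructor
    · refine ⟨hmem.1, ?_⟩
      intro i hi1 hi2
      rcases Nat.lt_or_ge i (n+1) with h|h
      · exact hmem.2 i hi1 (by omega)
      · have hieq : i = n+1 := by omega
        rw [hieq]
        show (⌊β * (betaT β)^[(n+1)-1] (x+d)⌋ : ℤ) = ⌊β * (betaT β)^[(n+1)-1] x⌋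
        simpa using hfloor
    · rw [Function.iterate_succ_apply', Function.iterate_succ_apply', betaT, betaT, hfloor, hiter]
      push_cast
      ring

end CFAux
namespace CFAux

open Set

lemma endpoints_diff {z : ℝ} (haz : ∀ i, 1 ≤ i → 1 ≤ cfA i z) (t : ℕ) :
    max (cfE1 z (t+1)) (cfE2 z t) - min (cfE1 z (t+1)) (cfE2 z t) ≤ 1/((t:ℝ)+1) := by
  have hQ1pos := cfQr_pos haz (t+1)
  have hQ0pos := cfQr_pos haz t
  have hdetr : (cfP z (t+1) : ℝ)*(cfQ z t : ℝ) - (cfQ z (t+1) : ℝ)*(cfP z t : ℝ)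
      = (-1:ℝ)^t := by exact_mod_cast conv_det z t
  have hdiff : cfE1 z (t+1) - cfE2 z t
      = ((-1:ℝ)^t)/((cfQ z (t+1) : ℝ)*((cfQ z (t+1) : ℝ)+(cfQ z t : ℝ))) := by
    rw [cfE1, cfE2, div_sub_div _ _ (ne_of_gt hQ1pos) (by positivity)]
    congr 1
    linear_combination hdetr
  have habs : |cfE1 z (t+1) - cfE2 z t|
      = 1/((cfQ z (t+1) : ℝ)*((cfQ z (t+1) : ℝ)+(cfQ z t : ℝ))) := by
    rw [hdiff, abs_div, abs_pow, abs_neg, abs_one, one_pow,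
      abs_of_pos (by positivity)]
  rw [max_sub_min_eq_abs, abs_sub_comm, habs]
  have hle : ((t:ℝ)+1) ≤ (cfQ z (t+1) : ℝ)*((cfQ z (t+1) : ℝ)+(cfQ z t : ℝ)) := by
    have h1 : ((t:ℝ)+1) ≤ (cfQ z (t+1) : ℝ) := by
      have := le_cfQ haz (t+1)
      push_cast at this ⊢
      exact_mod_cast this
    nlinarith
  exact one_div_le_one_div_of_le (by positivity) hle

end CFAux

private theorem log_q_kn_plus_three_lower_aux (β : ℝ) (hβ : 1 < β)
    (x : ℝ) (hx : x ∈ Set.Ico (0:ℝ) 1) (hirr : Irrational x) (n : ℕ) (hn : 1 ≤ n) :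
    Real.log (cfQ x (kCF β n x + 3)) - (Real.log β / 2) * n ≥ -(Real.log 6 / 2) := by
  open CFAux in
  have hxI : x ∈ Set.Ioo (0:ℝ) 1 := ⟨lt_of_le_of_ne hx.1 (Ne.symm hirr.ne_zero), hx.2⟩
  have haz : ∀ i, 1 ≤ i → 1 ≤ cfA i x := fun i _ => CFAux.cfA_one_le hxI hirr i
  obtain ⟨δ, hδ0, hδ⟩ := CFAux.approx_right β hβ x hx n
  have hy0 := (hδ (δ/2) (by linarith) (by linarith)).1
  set SS := {m | betaCyl β n x ⊆ cfCyl m x} with hSSdef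
  have hbdd : BddAbove SS := by
    refine ⟨Nat.ceil (2/δ), ?_⟩
    intro m hm
    match m with
    | 0 => exact Nat.zero_le _
    | (t+1) =>
      have hy0c : x + δ/2 ∈ cfCyl (t+1) x := hm hy0
      have hxc := CFAux.forward t x haz x hx.1 hx.2 (fun _ _ _ => rfl)
      have hyc := CFAux.forward t x haz (x+δ/2) (by linarith [hy0c.1.1]) hy0c.1.2 hy0c.2
      have hed := CFAux.endpoints_diff haz t
      have h1 : δ/2 ≤ 1/((t:ℝ)+1) := by
        have h2 : δ/2 = (x + δ/2) - x := by ring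
        linarith [hxc.1, hyc.2]
      have hub : ((t:ℝ)+1) ≤ 2/δ := by
        rw [le_div_iff₀ hδ0]
        rw [div_le_div_iff₀ (by norm_num) (by positivity)] at h1
        linarith
      have h3 : ((t:ℝ)+1) ≤ (Nat.ceil (2/δ) : ℝ) := hub.trans (Nat.le_ceil _)
      exact_mod_cast h3
  have h0mem : 0 ∈ SS := by
    intro y hy
    exact ⟨hy.1, fun i h1 h2 => by omega⟩
  set k := kCF β n x with hkdef
  have hksup : sSup SS = k := by rw [hkdef, kCF]
  have hknot : (k+1) ∉ SS := by
    intro hmem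
    have h := le_csSup hbdd hmem
    rw [hksup] at h
    omega
  obtain ⟨y, hyb, hyc⟩ := Set.not_subset.mp hknot
  have hnb : ¬(min (cfE1 x (k+1)) (cfE2 x k) < y ∧ y < max (cfE1 x (k+1)) (cfE2 x k)) := by
    rintro ⟨h1, h2⟩
    exact hyc ⟨hyb.1, CFAux.backward k x hxI hirr y h1 h2⟩
  obtain ⟨hsign, hdist1, hdist2⟩ := CFAux.endpoint_dist hxI hirr k
  set q3 : ℝ := ((cfQ x (k+3) : ℤ) : ℝ) with hq3def
  have hq3one : (1:ℝ) ≤ q3 := by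
    rw [hq3def]; exact_mod_cast CFAux.cfQ_one_le haz (k+3)
  set e1 := cfE1 x (k+1) with he1def
  set e2 := cfE2 x k with he2def
  have hq : 1/(6*q3^2) < |y - x| := by
    rcases mul_neg_iff.mp hsign with ⟨hp1, hp2⟩|⟨hp1, hp2⟩
    · -- x - e1 > 0, x - e2 < 0 : e1 < x < e2
      rw [min_eq_left (by linarith : e1 ≤ e2), max_eq_right (by linarith : e1 ≤ e2)] at hnb
      rcases not_and_or.mp hnb with h|h
      · push_neg at h
        calc 1/(6*q3^2) < |x - e1| := hdist1
          _ = x - e1 := abs_of_pos hp1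
          _ ≤ x - y := by linarith
          _ ≤ |y - x| := by rw [abs_sub_comm]; exact le_abs_self _
      · push_neg at h
        calc 1/(6*q3^2) < |x - e2| := hdist2
          _ = e2 - x := by rw [abs_of_neg hp2]; ring
          _ ≤ y - x := by linarith
          _ ≤ |y - x| := le_abs_self _
    · -- e2 < x < e1
      rw [min_eq_right (by linarith : e2 ≤ e1), max_eq_left (by linarith : e2 ≤ e1)] at hnb
      rcases not_and_or.mp hnb with h|h
      · push_neg at h
        calc 1/(6*q3^2) < |x - e2| := hdist2
          _ = x - e2 := abs_of_pos hp2
          _ ≤ x - y := by linarith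
          _ ≤ |y - x| := by rw [abs_sub_comm]; exact le_abs_self _
      · push_neg at h
        calc 1/(6*q3^2) < |x - e1| := hdist1
          _ = e1 - x := by rw [abs_of_neg hp1]; ring
          _ ≤ y - x := by linarith
          _ ≤ |y - x| := le_abs_self _
  have hclose : |y - x| * β^n < 1 := CFAux.cyl_close hβ hx hyb
  have hβn : (0:ℝ) < β^n := by positivity
  have hIy : |y - x| < 1/β^n := by rw [lt_div_iff₀ hβn]; exact hclose
  have hbn : β^n < 6*q3^2 := by
    have h := lt_trans hq hIy
    exact lt_of_one_div_lt_one_div (by positivity) h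
  have hlog := Real.log_le_log (by positivity : (0:ℝ) < β^n) hbn.le
  rw [Real.log_pow, Real.log_mul (by norm_num) (by positivity), Real.log_pow] at hlog
  push_cast at hlog
  have : Real.log ((cfQ x (k+3) : ℤ) : ℝ) = Real.log q3 := by rw [hq3def]
  push_cast
  linarith [hlog]
theorem log_q_kn_plus_three_lower (β : ℝ) (hβ : 1 < β)
    (x : ℝ) (hx : x ∈ Set.Ico (0:ℝ) 1) (hirr : Irrational x) (n : ℕ) (hn : 1 ≤ n) :
    Real.log (cfQ x (kCF β n x + 3)) - (Real.log β / 2) * n ≥ -(Real.log 6 / 2) := by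
  exact log_q_kn_plus_three_lower_aux β hβ x hx hirr n hn
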